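/- Let f: [0,∞) → ℝ be bounded and uniformly continuous. Then for every x ≥ 1/2 and n ∈ ℕ, |K_n*(f;x) − f(x)| ≤ 2ω(f; δ*_{n,x}), where ω is the modulus of continuity and δ*_{n,x} = sqrt(K_n*((t−x)²;x)). -/

import Mathlib

noncomputable section

/-- θ_k = 0 if k even, 1 if k odd. -/
def theta (k : ℕ) : ℝ := if Even k then 0 else 1

/-- Dunkl coefficients γ_μ(n). -/
def gammaD (mu : ℝ) (n : ℕ) : ℝ :=
  if Even n then
    2 ^ n * (Nat.factorial (n / 2)) * Real.Gamma ((n / 2 : ℕ) + mu + 1 / 2) / Real.Gamma (mu + 1 / 2)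
  else
    2 ^ n * (Nat.factorial (n / 2)) * Real.Gamma ((n / 2 : ℕ) + mu + 3 / 2) / Real.Gamma (mu + 1 / 2)

/-- Dunkl exponential e_μ(x) = Σ xⁿ/γ_μ(n). -/
def eD (mu x : ℝ) : ℝ := ∑' n : ℕ, x ^ n / gammaD mu n

/-- r_n(x) = x - 1/(2n). -/
def rn (n : ℕ) (x : ℝ) : ℝ := x - 1 / (2 * n)

/-- Modified Dunkl Szász–Mirakjan–Kantorovich operator K_n. -/
def Kn (mu : ℝ) (n : ℕ) (f : ℝ → ℝ) (x : ℝ) : ℝ :=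
  (n / eD mu (n * rn n x)) * ∑' k : ℕ, (n * rn n x) ^ k / gammaD mu k *
    ∫ t in (((k : ℝ) + 2 * mu * theta k) / n)..(((k : ℝ) + 1 + 2 * mu * theta k) / n), f t

/-- Stancu-type modified Dunkl Szász–Kantorovich operator K_n^*. -/
def KnStar (mu a b : ℝ) (n : ℕ) (f : ℝ → ℝ) (x : ℝ) : ℝ :=
  (n / eD mu (n * rn n x)) * ∑' k : ℕ, (n * rn n x) ^ k / gammaD mu k *
    ∫ t in (((k : ℝ) + 2 * mu * theta k) / n)..(((k : ℝ) + 1 + 2 * mu * theta k) / n),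
      f ((n * t + a) / (n + b))

/-- Dunkl Szász–Kantorovich–Stancu operator T_n^*. -/
def TnStar (mu a b : ℝ) (n : ℕ) (f : ℝ → ℝ) (x : ℝ) : ℝ :=
  (n / eD mu (n * x)) * ∑' k : ℕ, (n * x) ^ k / gammaD mu k *
    ∫ t in (((k : ℝ) + 2 * mu * theta k) / n)..(((k : ℝ) + 1 + 2 * mu * theta k) / n),
      f ((n * t + a) / (n + b))

/-- Modulus of continuity of f on [0,∞). -/
def modCont (f : ℝ → ℝ) (d : ℝ) : ℝ :=
  sSup {y | ∃ t s : ℝ, 0 ≤ t ∧ 0 ≤ s ∧ |t - s| ≤ d ∧ y = |f t - f s|}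

lemma gammaD_pos (mu : ℝ) (hmu : 0 ≤ mu) (k : ℕ) : 0 < gammaD mu k := by
  have h0 : 0 < Real.Gamma (mu + 1/2) := Real.Gamma_pos_of_pos (by linarith)
  unfold gammaD
  split
  · have : 0 < Real.Gamma ((k / 2 : ℕ) + mu + 1 / 2) :=
      Real.Gamma_pos_of_pos (by positivity)
    positivity
  · have : 0 < Real.Gamma ((k / 2 : ℕ) + mu + 3 / 2) :=
      Real.Gamma_pos_of_pos (by positivity)
    positivity

lemma gammaD_zero (mu : ℝ) (hmu : 0 ≤ mu) : gammaD mu 0 = 1 := by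
  have h0 : 0 < Real.Gamma (mu + 1/2) := Real.Gamma_pos_of_pos (by linarith)
  have h0' : Real.Gamma (mu + 2⁻¹) ≠ 0 := by
    rw [show (2⁻¹ : ℝ) = 1/2 by norm_num]; exact h0.ne'
  simp [gammaD, div_self h0']

lemma gammaD_succ_ge (mu : ℝ) (hmu : 0 ≤ mu) (k : ℕ) :
    ((k : ℝ) + 1) * gammaD mu k ≤ gammaD mu (k + 1) := by
  have h0 : 0 < Real.Gamma (mu + 1/2) := Real.Gamma_pos_of_pos (by linarith)
  rcases Nat.even_or_odd k with he | ho
  · obtain ⟨m, rfl⟩ := he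
    have h1 : ¬ Even (m + m + 1) := by simp [Nat.even_add_one, Nat.even_add]
    have h2 : (m + m) / 2 = m := by omega
    have h3 : (m + m + 1) / 2 = m := by omega
    have hGpos : 0 < Real.Gamma ((m : ℝ) + mu + 1/2) := Real.Gamma_pos_of_pos (by positivity)
    have hrec : Real.Gamma ((m : ℝ) + mu + 3/2) = ((m : ℝ) + mu + 1/2) * Real.Gamma ((m : ℝ) + mu + 1/2) := by
      have he2 : (m:ℝ) + mu + 3/2 = ((m:ℝ) + mu + 1/2) + 1 := by ring
      rw [he2, Real.Gamma_add_one (by positivity)]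
    simp only [gammaD, if_pos (Even.add_self m), if_neg h1, h2, h3]
    rw [hrec, mul_div_assoc', div_le_div_iff_of_pos_right h0]
    have hfac : (0:ℝ) < (Nat.factorial m : ℝ) := by positivity
    have h2p : (0:ℝ) < 2 ^ (m + m) := by positivity
    have hstep : (2:ℝ) ^ (m + m + 1) = 2 * 2 ^ (m + m) := by ring
    rw [hstep]
    push_cast
    nlinarith [mul_pos (mul_pos h2p hfac) hGpos, mul_nonneg (mul_nonneg h2p.le hfac.le) (mul_nonneg hmu hGpos.le)]
  · obtain ⟨m, rfl⟩ := ho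
    have h1 : ¬ Even (2*m + 1) := by simp [Nat.even_add_one]
    have h2 : (2*m + 1) / 2 = m := by omega
    have h3 : (2*m + 1 + 1) / 2 = m + 1 := by omega
    have h4 : Even (2*m + 1 + 1) := ⟨m+1, by omega⟩
    have hGpos : 0 < Real.Gamma ((m : ℝ) + mu + 3/2) := Real.Gamma_pos_of_pos (by positivity)
    simp only [gammaD, if_neg h1, if_pos h4, h2, h3]
    have harg : ((m + 1 : ℕ) : ℝ) + mu + 1/2 = (m : ℝ) + mu + 3/2 := by push_cast; ring
    rw [harg, mul_div_assoc', div_le_div_iff_of_pos_right h0]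
    have hfacs : (Nat.factorial (m+1) : ℝ) = ((m:ℝ)+1) * Nat.factorial m := by
      rw [Nat.factorial_succ]; push_cast; ring
    rw [hfacs]
    have hfac : (0:ℝ) < (Nat.factorial m : ℝ) := by positivity
    have h2p : (0:ℝ) < 2 ^ (2*m + 1) := by positivity
    have hstep : (2:ℝ) ^ (2*m + 1 + 1) = 2 * 2 ^ (2*m + 1) := by ring
    rw [hstep]
    push_cast
    nlinarith [mul_pos (mul_pos h2p hfac) hGpos]

lemma factorial_le_gammaD (mu : ℝ) (hmu : 0 ≤ mu) (k : ℕ) :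
    (Nat.factorial k : ℝ) ≤ gammaD mu k := by
  induction k with
  | zero => simp [gammaD_zero mu hmu]
  | succ k ih =>
    have h1 := gammaD_succ_ge mu hmu k
    have h2 : (Nat.factorial (k+1) : ℝ) = ((k:ℝ)+1) * Nat.factorial k := by
      rw [Nat.factorial_succ]; push_cast; ring
    rw [h2]
    calc ((k:ℝ)+1) * Nat.factorial k ≤ ((k:ℝ)+1) * gammaD mu k := by
          apply mul_le_mul_of_nonneg_left ih (by positivity)
      _ ≤ gammaD mu (k+1) := h1

lemma sq_le_pow_two (k : ℕ) : ((k:ℝ) + 1)^2 ≤ 4 * 2 ^ k := by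
  induction k with
  | zero => norm_num
  | succ k ih =>
    have h2 : (2:ℝ)^(k+1) = 2 * 2^k := by ring
    push_cast
    rw [h2]
    rcases Nat.lt_or_ge k 2 with hk | hk
    · interval_cases k <;> norm_num
    · have hk1 : (2:ℝ) ≤ k := by exact_mod_cast hk
      push_cast at ih
      nlinarith [sq_nonneg ((k:ℝ) - 2)]

noncomputable section


lemma modCont_bddAbove (f : ℝ → ℝ) (C d : ℝ) (hC : ∀ t : ℝ, 0 ≤ t → |f t| ≤ C) :
    BddAbove {y | ∃ t s : ℝ, 0 ≤ t ∧ 0 ≤ s ∧ |t - s| ≤ d ∧ y = |f t - f s|} := by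
  refine ⟨2 * C, ?_⟩
  rintro y ⟨t, s, ht, hs, _, rfl⟩
  calc |f t - f s| ≤ |f t| + |f s| := abs_sub _ _
    _ ≤ C + C := add_le_add (hC t ht) (hC s hs)
    _ = 2 * C := by ring

lemma modCont_nonneg (f : ℝ → ℝ) (C d : ℝ) (hC : ∀ t : ℝ, 0 ≤ t → |f t| ≤ C) (hd : 0 ≤ d) :
    0 ≤ modCont f d := by
  apply le_csSup (modCont_bddAbove f C d hC)
  exact ⟨0, 0, le_refl 0, le_refl 0, by simpa using hd, by simp⟩

lemma le_modCont (f : ℝ → ℝ) (C d : ℝ) (hC : ∀ t : ℝ, 0 ≤ t → |f t| ≤ C)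
    (t s : ℝ) (ht : 0 ≤ t) (hs : 0 ≤ s) (hts : |t - s| ≤ d) :
    |f t - f s| ≤ modCont f d := by
  apply le_csSup (modCont_bddAbove f C d hC)
  exact ⟨t, s, ht, hs, hts, rfl⟩

lemma modCont_chain (f : ℝ → ℝ) (C d : ℝ) (hC : ∀ t : ℝ, 0 ≤ t → |f t| ≤ C) (hd : 0 ≤ d) :
    ∀ m : ℕ, ∀ t s : ℝ, 0 ≤ t → 0 ≤ s → |t - s| ≤ m * d →
      |f t - f s| ≤ m * modCont f d := by
  intro m
  induction m with
  | zero =>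
    intro t s ht hs hts
    have : t = s := by
      simp only [Nat.cast_zero, zero_mul] at hts
      have := abs_nonneg (t - s)
      have h := le_antisymm hts this
      -- |t - s| = 0
      have := abs_eq_zero.mp (le_antisymm hts (abs_nonneg _))
      linarith
    simp [this]
  | succ m ih =>
    intro t s ht hs hts
    rcases eq_or_lt_of_le hd with rfl | hd'
    · have hts0 : t = s := by
        have h : |t - s| ≤ 0 := by simpa using hts
        have := abs_eq_zero.mp (le_antisymm h (abs_nonneg _))
        linarith
      rw [hts0, sub_self, abs_zero]
      exact mul_nonneg (by positivity) (modCont_nonneg f C 0 hC le_rfl)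
    · set p := ((m : ℝ) * t + s) / (m + 1) with hp
      have hm1 : (0:ℝ) < (m:ℝ) + 1 := by positivity
      have hppos : 0 ≤ p := by positivity
      have h1 : |t - p| ≤ d := by
        have : t - p = (t - s) / ((m:ℝ) + 1) := by rw [hp, eq_div_iff hm1.ne', sub_mul, div_mul_cancel₀ _ hm1.ne']; ring
        rw [this, abs_div, abs_of_pos hm1, div_le_iff₀ hm1]
        push_cast at hts
        nlinarith [abs_nonneg (t - s)]
      have h2 : |p - s| ≤ m * d := by
        have : p - s = (m : ℝ) * (t - s) / ((m:ℝ) + 1) := by rw [hp, eq_div_iff hm1.ne', sub_mul, div_mul_cancel₀ _ hm1.ne']; ring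
        rw [this, abs_div, abs_of_pos hm1, div_le_iff₀ hm1, abs_mul, abs_of_nonneg (by positivity : (0:ℝ) ≤ (m:ℝ))]
        push_cast at hts
        nlinarith [abs_nonneg (t - s), Nat.cast_nonneg (α := ℝ) m, mul_le_mul_of_nonneg_left hts (Nat.cast_nonneg (α := ℝ) m)]
      calc |f t - f s| ≤ |f t - f p| + |f p - f s| := abs_sub_le _ _ _
        _ ≤ modCont f d + m * modCont f d :=
            add_le_add (le_modCont f C d hC t p ht hppos h1) (ih p s hppos hs h2)
        _ = ((m:ℕ) + 1 : ℝ) * modCont f d := by ring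
        _ = ((m + 1 : ℕ) : ℝ) * modCont f d := by push_cast; ring

lemma abs_sub_le_modCont (f : ℝ → ℝ) (C d : ℝ) (hC : ∀ t : ℝ, 0 ≤ t → |f t| ≤ C) (hd : 0 < d)
    (t s : ℝ) (ht : 0 ≤ t) (hs : 0 ≤ s) :
    |f t - f s| ≤ (1 + (t - s)^2 / d^2) * modCont f d := by
  have hω : 0 ≤ modCont f d := modCont_nonneg f C d hC hd.le
  rcases le_or_gt |t - s| d with h | h
  · have := le_modCont f C d hC t s ht hs h
    have hcoef : (1:ℝ) ≤ 1 + (t - s)^2 / d^2 := by nlinarith [sq_nonneg (t-s), sq_nonneg d, div_nonneg (sq_nonneg (t-s)) (sq_nonneg d)]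
    nlinarith
  · set r := |t - s| / d with hr
    have hr0 : 0 ≤ r := by positivity
    have hr1 : 1 < r := by
      rw [hr, lt_div_iff₀ hd]; linarith
    set m := ⌈r⌉₊ with hm
    have h1 : |t - s| ≤ (m : ℝ) * d := by
      have := Nat.le_ceil r
      rw [hr, div_le_iff₀ hd] at this
      exact this
    have h2 := modCont_chain f C d hC hd.le m t s ht hs h1
    have h3 : (m : ℝ) < r + 1 := Nat.ceil_lt_add_one hr0
    have h4 : r ≤ r^2 := by nlinarith
    have h5 : r^2 = (t - s)^2 / d^2 := by
      rw [hr]; rw [div_pow, sq_abs]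
    calc |f t - f s| ≤ (m:ℝ) * modCont f d := h2
      _ ≤ (1 + (t - s)^2 / d^2) * modCont f d := by
          apply mul_le_mul_of_nonneg_right _ hω
          rw [← h5]; linarith



set_option maxHeartbeats 2000000 in
theorem KnStar_modCont_estimate (mu a b : ℝ) (hmu : 0 ≤ mu) (ha : 0 ≤ a) (hab : a ≤ b)
    (f : ℝ → ℝ) (hfb : ∃ C : ℝ, ∀ t : ℝ, 0 ≤ t → |f t| ≤ C)
    (hfu : UniformContinuousOn f (Set.Ici 0))
    (n : ℕ) (hn : 0 < n) (x : ℝ) (hx : 1 / 2 ≤ x) :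
    |KnStar mu a b n f x - f x|
      ≤ 2 * modCont f (Real.sqrt (KnStar mu a b n (fun t => (t - x) ^ 2) x)) := by
  obtain ⟨C₀, hC₀⟩ := hfb
  set C := max C₀ 0 with hCdef
  have hC : ∀ t : ℝ, 0 ≤ t → |f t| ≤ C := fun t ht => (hC₀ t ht).trans (le_max_left _ _)
  have hC0 : 0 ≤ C := le_max_right _ _
  have hnR : (0:ℝ) < n := Nat.cast_pos.mpr hn
  have hn1 : (1:ℝ) ≤ n := Nat.one_le_cast.mpr hn
  have hb : 0 ≤ b := ha.trans hab
  have hnb : (0:ℝ) < n + b := by linarith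
  have hx0 : 0 ≤ x := by linarith
  -- the point y
  set y : ℝ := ↑n * rn n x with hy_def
  have hy_eq : y = n * x - 1/2 := by
    rw [hy_def, rn]; field_simp
  have hy : 0 ≤ y := by
    rw [hy_eq]; nlinarith
  -- weights
  set A : ℕ → ℝ := fun k => y ^ k / gammaD mu k with hA_def
  have hA_nonneg : ∀ k, 0 ≤ A k := fun k =>
    div_nonneg (pow_nonneg hy k) (gammaD_pos mu hmu k).le
  have hA_le : ∀ k, A k ≤ y ^ k / Nat.factorial k := by
    intro k
    apply div_le_div_of_nonneg_left (pow_nonneg hy k) ?_ (factorial_le_gammaD mu hmu k)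
    · positivity
  have hA_sum : Summable A :=
    Summable.of_nonneg_of_le hA_nonneg hA_le (Real.summable_pow_div_factorial y)
  have hA0 : A 0 = 1 := by simp [hA_def, gammaD_zero mu hmu]
  -- eD value
  have heD_eq : eD mu y = ∑' k, A k := rfl
  have heD_ge : 1 ≤ eD mu y := by
    rw [heD_eq, ← hA0]
    exact Summable.le_tsum hA_sum 0 (fun j _ => hA_nonneg j)
  have heD_pos : 0 < eD mu y := lt_of_lt_of_le one_pos heD_ge
  -- endpoints
  set lk : ℕ → ℝ := fun k => ((k : ℝ) + 2 * mu * theta k) / n with hlk_def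
  set uk : ℕ → ℝ := fun k => ((k : ℝ) + 1 + 2 * mu * theta k) / n with huk_def
  have hθ : ∀ k, 0 ≤ theta k ∧ theta k ≤ 1 := by
    intro k; unfold theta; split <;> norm_num
  have hlk0 : ∀ k, 0 ≤ lk k := by
    intro k
    have := (hθ k).1
    have : 0 ≤ (k : ℝ) + 2 * mu * theta k := by positivity
    positivity
  have hluk : ∀ k, lk k ≤ uk k := by
    intro k
    simp only [hlk_def, huk_def]
    gcongr
    linarith
  have hduk : ∀ k, uk k - lk k = 1/n := by
    intro k; simp only [hlk_def, huk_def]; field_simp; ring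

  -- g and continuity
  set g : ℝ → ℝ := fun t => (↑n * t + a) / (↑n + b) with hg_def
  have hgc : Continuous g := by
    rw [hg_def]
    exact ((continuous_const.mul continuous_id).add continuous_const).div_const _
  have hg0 : ∀ t : ℝ, 0 ≤ t → 0 ≤ g t := by
    intro t ht
    simp only [hg_def]
    apply div_nonneg _ hnb.le
    nlinarith
  have hfc : ContinuousOn f (Set.Ici 0) := hfu.continuousOn
  have hint : ∀ (h : ℝ → ℝ), ContinuousOn h (Set.Ici 0) → ∀ k : ℕ,
      IntervalIntegrable (fun t => h (g t)) MeasureTheory.volume (lk k) (uk k) := by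
    intro h hh k
    apply ContinuousOn.intervalIntegrable
    rw [Set.uIcc_of_le (hluk k)]
    apply hh.comp hgc.continuousOn
    intro t htI
    exact hg0 t ((hlk0 k).trans htI.1)
  have hKf : ∀ h : ℝ → ℝ, KnStar mu a b n h x
      = (↑n / eD mu y) * ∑' k : ℕ, A k * ∫ t in lk k..uk k, h (g t) := fun h => rfl
  -- bound for the quadratic integrand
  set c : ℝ := 1 + 2*mu + a + x with hc_def
  have hc1 : 1 ≤ c := by simp only [hc_def]; linarith
  have hc0 : 0 ≤ c := by linarith
  have hgb : ∀ k : ℕ, ∀ t ∈ Set.Icc (lk k) (uk k), (g t - x)^2 ≤ ((k:ℝ)+c)^2 := by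
    intro k t ht
    have hgt0 : 0 ≤ g t := hg0 t ((hlk0 k).trans ht.1)
    have hknn : (0:ℝ) ≤ (k:ℝ) := Nat.cast_nonneg k
    have hup : g t ≤ (k:ℝ) + 1 + 2*mu + a := by
      have ht2 : t ≤ uk k := ht.2
      have h2 : ↑n * t ≤ ↑n * uk k := by nlinarith
      have h3 : (n:ℝ) * uk k = (k:ℝ) + 1 + 2*mu*theta k := by
        simp only [huk_def]; field_simp
      have hnum : ↑n * t + a ≤ (k:ℝ) + 1 + 2*mu + a := by
        nlinarith [(hθ k).1, (hθ k).2]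
      have hnum0 : (0:ℝ) ≤ ↑n * t + a := by
        have := mul_nonneg hgt0 hnb.le
        simp only [hg_def] at this
        rw [div_mul_cancel₀] at this
        · exact this
        · exact hnb.ne'
      calc g t ≤ ↑n * t + a := by
            simp only [hg_def]
            exact div_le_self hnum0 (by linarith)
        _ ≤ (k:ℝ) + 1 + 2*mu + a := hnum
    have hlow : -((k:ℝ)+c) ≤ g t - x := by simp only [hc_def]; linarith
    have hhigh : g t - x ≤ (k:ℝ)+c := by simp only [hc_def]; linarith
    exact sq_le_sq' hlow hhigh
  have hIq_int : ∀ k : ℕ, IntervalIntegrable (fun t => (g t - x)^2) MeasureTheory.volume (lk k) (uk k) :=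
    fun k => hint (fun s => (s - x)^2)
      (Continuous.continuousOn ((continuous_id.sub continuous_const).pow 2)) k
  have hIq_nonneg : ∀ k : ℕ, 0 ≤ ∫ t in lk k..uk k, (g t - x)^2 :=
    fun k => intervalIntegral.integral_nonneg (hluk k) (fun t _ => sq_nonneg _)
  have hIq_le : ∀ k : ℕ, (∫ t in lk k..uk k, (g t - x)^2) ≤ ((k:ℝ)+c)^2 / n := by
    intro k
    have h := intervalIntegral.integral_mono_on (hluk k) (hIq_int k)
      (intervalIntegrable_const) (hgb k)
    rw [intervalIntegral.integral_const, hduk k, smul_eq_mul] at h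
    calc (∫ t in lk k..uk k, (g t - x)^2) ≤ 1/↑n * ((k:ℝ)+c)^2 := h
      _ = ((k:ℝ)+c)^2 / n := by ring
  have hAsq_sum : Summable (fun k : ℕ => A k * ((k:ℝ)+c)^2) := by
    apply Summable.of_nonneg_of_le
      (fun k => mul_nonneg (hA_nonneg k) (sq_nonneg _))
      (fun k => ?_)
      ((Real.summable_pow_div_factorial (2*y)).mul_left (4*c^2))
    have e1 : ((k:ℝ)+c)^2 ≤ c^2*((k:ℝ)+1)^2 := by
      have hkc : (k:ℝ) + c ≤ c * ((k:ℝ)+1) := by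
        have hknn : (0:ℝ) ≤ (k:ℝ) := Nat.cast_nonneg k
        nlinarith
      calc ((k:ℝ)+c)^2 ≤ (c*((k:ℝ)+1))^2 := by
            apply sq_le_sq' _ hkc
            have hknn : (0:ℝ) ≤ (k:ℝ) := Nat.cast_nonneg k
            nlinarith
        _ = c^2*((k:ℝ)+1)^2 := by ring
    have e2 := sq_le_pow_two k
    have e3 : A k * ((k:ℝ)+c)^2 ≤ (y^k / Nat.factorial k) * (c^2 * (4 * 2^k)) := by
      apply mul_le_mul (hA_le k) _ (sq_nonneg _) (by positivity)
      calc ((k:ℝ)+c)^2 ≤ c^2*((k:ℝ)+1)^2 := e1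
        _ ≤ c^2 * (4*2^k) := by nlinarith [sq_nonneg c]
    calc A k * ((k:ℝ)+c)^2 ≤ (y^k / Nat.factorial k) * (c^2 * (4 * 2^k)) := e3
      _ = 4*c^2 * ((2*y)^k / Nat.factorial k) := by rw [mul_pow]; field_simp; ring
  have hSq_sum : Summable (fun k : ℕ => A k * ∫ t in lk k..uk k, (g t - x)^2) := by
    apply Summable.of_nonneg_of_le
      (fun k => mul_nonneg (hA_nonneg k) (hIq_nonneg k))
      (fun k => ?_) (hAsq_sum.div_const n)
    calc A k * (∫ t in lk k..uk k, (g t - x)^2)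
        ≤ A k * (((k:ℝ)+c)^2 / n) := mul_le_mul_of_nonneg_left (hIq_le k) (hA_nonneg k)
      _ = A k * ((k:ℝ)+c)^2 / n := by ring
  -- value of K_n^* on the quadratic
  have hK2eq : KnStar mu a b n (fun t => (t - x)^2) x
      = (↑n / eD mu y) * ∑' k : ℕ, A k * ∫ t in lk k..uk k, (g t - x)^2 := hKf _
  have hterm0 : 0 < ∫ t in (lk 0)..(uk 0), (g t - x)^2 := by
    have hl0 : lk 0 = 0 := by simp [hlk_def, theta]
    have hu0 : uk 0 = 1/↑n := by simp [huk_def, theta]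
    set al : ℝ := (n:ℝ)/(↑n+b) with hal_def
    set be : ℝ := a/(↑n+b) - x with hbe_def
    have hal : 0 < al := div_pos hnR hnb
    have hfun : ∀ t : ℝ, (g t - x)^2 = (al*t+be)^2 := by
      intro t
      simp only [hg_def, hal_def, hbe_def]
      field_simp
      ring
    rw [hl0, hu0]
    simp only [hfun]
    have hL : (0:ℝ) < 1/↑n := by positivity
    have h1 : (fun t : ℝ => (al*t+be)^2) = fun t => al^2*t^2 + ((2*al*be)*t + be^2) := by
      funext t; ring
    rw [h1]
    rw [intervalIntegral.integral_add (f := fun t : ℝ => al^2 * t^2) (g := fun t : ℝ => 2*al*be*t + be^2)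
        ((continuous_const.mul (continuous_pow 2)).intervalIntegrable _ _)
        (((continuous_const.mul continuous_id').add continuous_const).intervalIntegrable _ _),
      intervalIntegral.integral_add (f := fun t : ℝ => 2*al*be*t) (g := fun _ : ℝ => be^2)
        ((continuous_const.mul continuous_id').intervalIntegrable _ _)
        (continuous_const.intervalIntegrable _ _),
      intervalIntegral.integral_const, intervalIntegral.integral_const_mul,
      intervalIntegral.integral_const_mul, integral_id]
    have h2 : ∫ t in (0:ℝ)..(1/↑n), t^2 = (1/↑n)^3/3 := by
      rw [integral_pow]; norm_num
    rw [h2]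
    simp only [smul_eq_mul, sub_zero]
    rcases eq_or_ne be 0 with hbe0 | hbe0
    · rw [hbe0]
      rw [show (1/(n:ℝ)) ^ 2 - 0 ^2 = (1/↑n)^2 by ring]
      nlinarith [pow_pos hL 3, pow_pos hal 2]
    · have hbe2 : 0 < be^2 := by positivity
      nlinarith [sq_nonneg (2*al*(1/↑n) + 3*be), pow_pos hL 3, pow_pos hal 2, mul_pos hL hbe2]
  have hSq_pos : 0 < ∑' k : ℕ, A k * ∫ t in lk k..uk k, (g t - x)^2 := by
    have h0 : A 0 * (∫ t in (lk 0)..(uk 0), (g t - x)^2) ≤ ∑' k : ℕ, A k * ∫ t in lk k..uk k, (g t - x)^2 :=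
      Summable.le_tsum hSq_sum 0 (fun j _ => mul_nonneg (hA_nonneg j) (hIq_nonneg j))
    rw [hA0, one_mul] at h0
    exact lt_of_lt_of_le hterm0 h0
  have hK2pos : 0 < KnStar mu a b n (fun t => (t - x)^2) x := by
    rw [hK2eq]
    exact mul_pos (div_pos hnR heD_pos) hSq_pos
  set δ : ℝ := Real.sqrt (KnStar mu a b n (fun t => (t - x)^2) x) with hδ_def
  have hδpos : 0 < δ := Real.sqrt_pos.mpr hK2pos
  have hδsq : δ^2 = KnStar mu a b n (fun t => (t - x)^2) x := Real.sq_sqrt hK2pos.le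
  set ω : ℝ := modCont f δ with hω_def
  have hω0 : 0 ≤ ω := modCont_nonneg f C δ hC hδpos.le
  have hptw : ∀ t : ℝ, 0 ≤ t → |f t - f x| ≤ ω + ω/δ^2*(t - x)^2 := by
    intro t ht
    calc |f t - f x| ≤ (1 + (t-x)^2/δ^2) * ω := abs_sub_le_modCont f C δ hC hδpos t x ht hx0
      _ = ω + ω/δ^2 * (t-x)^2 := by field_simp
  have hGint : ∀ k : ℕ, IntervalIntegrable (fun t => ω + ω/δ^2*(g t - x)^2)
      MeasureTheory.volume (lk k) (uk k) :=
    fun k => hint (fun s => ω + ω/δ^2*(s - x)^2)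
      (Continuous.continuousOn (continuous_const.add
        (continuous_const.mul ((continuous_id.sub continuous_const).pow 2)))) k
  have hΔint : ∀ k : ℕ, IntervalIntegrable (fun t => f (g t) - f x)
      MeasureTheory.volume (lk k) (uk k) :=
    fun k => hint (fun s => f s - f x) (hfc.sub continuousOn_const) k
  have hfgint : ∀ k : ℕ, IntervalIntegrable (fun t => f (g t))
      MeasureTheory.volume (lk k) (uk k) := fun k => hint f hfc k
  have habsΔ : ∀ k : ℕ, |∫ t in lk k..uk k, (f (g t) - f x)|
      ≤ ∫ t in lk k..uk k, (ω + ω/δ^2*(g t - x)^2) := by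
    intro k
    have hb1 : ∀ t ∈ Set.Icc (lk k) (uk k), f (g t) - f x ≤ ω + ω/δ^2*(g t - x)^2 := by
      intro t ht
      exact le_trans (le_abs_self _) (hptw (g t) (hg0 t ((hlk0 k).trans ht.1)))
    have hb2 : ∀ t ∈ Set.Icc (lk k) (uk k), -(ω + ω/δ^2*(g t - x)^2) ≤ f (g t) - f x := by
      intro t ht
      have := hptw (g t) (hg0 t ((hlk0 k).trans ht.1))
      have h2 := neg_abs_le (f (g t) - f x)
      linarith
    refine abs_le.mpr ⟨?_, intervalIntegral.integral_mono_on (hluk k) (hΔint k) (hGint k) hb1⟩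
    have hGnegint : IntervalIntegrable (fun t => -(ω + ω/δ^2*(g t - x)^2))
        MeasureTheory.volume (lk k) (uk k) :=
      hint (fun s => -(ω + ω/δ^2*(s - x)^2))
        (Continuous.continuousOn (continuous_const.add
          (continuous_const.mul ((continuous_id.sub continuous_const).pow 2))).neg) k
    have h3 := intervalIntegral.integral_mono_on (hluk k) hGnegint (hΔint k) hb2
    rwa [intervalIntegral.integral_neg] at h3
  have hIG : ∀ k : ℕ, (∫ t in lk k..uk k, (ω + ω/δ^2*(g t - x)^2))
      = ω/↑n + ω/δ^2 * ∫ t in lk k..uk k, (g t - x)^2 := by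
    intro k
    rw [intervalIntegral.integral_add intervalIntegrable_const ((hIq_int k).const_mul _),
      intervalIntegral.integral_const, hduk k, smul_eq_mul,
      intervalIntegral.integral_const_mul]
    ring
  set u : ℕ → ℝ := fun k => A k * ∫ t in lk k..uk k, (f (g t) - f x) with hu_def
  set v : ℕ → ℝ := fun k => A k * (ω/↑n + ω/δ^2 * ∫ t in lk k..uk k, (g t - x)^2) with hv_def
  have huv : ∀ k : ℕ, |u k| ≤ v k := by
    intro k
    simp only [hu_def, hv_def]
    rw [abs_mul, abs_of_nonneg (hA_nonneg k)]
    apply mul_le_mul_of_nonneg_left _ (hA_nonneg k)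
    rw [← hIG k]
    exact habsΔ k
  have hv_sum : Summable v := by
    have hveq : v = fun k => (ω/↑n) * A k + (ω/δ^2) * (A k * ∫ t in lk k..uk k, (g t - x)^2) :=
      funext fun k => by simp only [hv_def]; ring
    rw [hveq]
    exact (hA_sum.mul_left _).add (hSq_sum.mul_left _)
  have hunorm_sum : Summable (fun k => ‖u k‖) :=
    Summable.of_nonneg_of_le (fun k => norm_nonneg _)
      (fun k => by rw [Real.norm_eq_abs]; exact huv k) hv_sum
  have hconst_sum : Summable (fun k : ℕ => A k * (f x / ↑n)) := hA_sum.mul_right _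
  have hfg_sum : Summable (fun k : ℕ => A k * ∫ t in lk k..uk k, f (g t)) := by
    apply Summable.of_norm_bounded (g := fun k => A k * (C/↑n)) (hA_sum.mul_right _)
    intro k
    rw [Real.norm_eq_abs, abs_mul, abs_of_nonneg (hA_nonneg k)]
    apply mul_le_mul_of_nonneg_left _ (hA_nonneg k)
    have hbnd : ∀ t ∈ Set.uIoc (lk k) (uk k), ‖f (g t)‖ ≤ C := by
      intro t htoc
      rw [Set.uIoc_of_le (hluk k)] at htoc
      rw [Real.norm_eq_abs]
      exact hC _ (hg0 t ((hlk0 k).trans htoc.1.le))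
    have h4 := intervalIntegral.norm_integral_le_of_norm_le_const hbnd
    rw [Real.norm_eq_abs] at h4
    calc |∫ t in lk k..uk k, f (g t)| ≤ C * |uk k - lk k| := h4
      _ = C / ↑n := by rw [hduk k, abs_of_pos (by positivity : (0:ℝ) < 1/↑n)]; ring
  have hsplit : KnStar mu a b n f x - f x = (↑n / eD mu y) * ∑' k : ℕ, u k := by
    have h1 : ∀ k : ℕ, u k = A k * (∫ t in lk k..uk k, f (g t)) - A k * (f x / ↑n) := by
      intro k
      simp only [hu_def]
      rw [intervalIntegral.integral_sub (hfgint k) intervalIntegrable_const,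
        intervalIntegral.integral_const, hduk k, smul_eq_mul]
      ring
    have h5 : (∑' k : ℕ, u k) = (∑' k : ℕ, A k * ∫ t in lk k..uk k, f (g t))
        - ∑' k : ℕ, A k * (f x / ↑n) := by
      rw [← Summable.tsum_sub hfg_sum hconst_sum]
      exact tsum_congr h1
    rw [hKf f, h5, tsum_mul_right, ← heD_eq]
    field_simp
  have habs : |KnStar mu a b n f x - f x| ≤ (↑n / eD mu y) * ∑' k : ℕ, v k := by
    rw [hsplit, abs_mul, abs_of_pos (div_pos hnR heD_pos)]
    apply mul_le_mul_of_nonneg_left _ (div_pos hnR heD_pos).le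
    calc |∑' k : ℕ, u k| = ‖∑' k : ℕ, u k‖ := (Real.norm_eq_abs _).symm
      _ ≤ ∑' k : ℕ, ‖u k‖ := norm_tsum_le_tsum_norm hunorm_sum
      _ ≤ ∑' k : ℕ, v k := Summable.tsum_le_tsum
          (fun k => by rw [Real.norm_eq_abs]; exact huv k) hunorm_sum hv_sum
  have hvsum_eq : (∑' k : ℕ, v k) = (ω/↑n) * eD mu y
      + (ω/δ^2) * ∑' k : ℕ, A k * ∫ t in lk k..uk k, (g t - x)^2 := by
    have hveq : v = fun k => (ω/↑n) * A k + (ω/δ^2) * (A k * ∫ t in lk k..uk k, (g t - x)^2) :=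
      funext fun k => by simp only [hv_def]; ring
    rw [hveq, Summable.tsum_add (hA_sum.mul_left _) (hSq_sum.mul_left _), tsum_mul_left,
      tsum_mul_left, heD_eq]
  calc |KnStar mu a b n f x - f x| ≤ (↑n / eD mu y) * ∑' k : ℕ, v k := habs
    _ = ω + (ω/δ^2) * ((↑n/eD mu y) * ∑' k : ℕ, A k * ∫ t in lk k..uk k, (g t - x)^2) := by
        rw [hvsum_eq]
        field_simp
    _ = ω + (ω/δ^2) * KnStar mu a b n (fun t => (t-x)^2) x := by rw [← hK2eq]
    _ = 2 * ω := by
        rw [← hδsq]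
        field_simp
        ring
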